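/- arXiv:1605.00858 — 5 statements merged into one kernel-verified Lean document; each statement's English description precedes it below -/
import Mathlib

section
/- Every twice differentiable solution x : ℝ → ℝ of the unforced, undamped Duffing equation x''(t) + x(t) + x(t)³ = 0 with (x(0), x'(0)) ≠ (0, 0) is periodic: there exists T > 0 such that x(t + T) = x(t) and x'(t + T) = x'(t) for all t ∈ ℝ. -/
open Set Filter Real Topology

/-- A function with derivative bounded below by a positive constant on `[c, ∞)`
cannot be bounded. -/
lemma duffing_escape {f f' : ℝ → ℝ} {C c R : ℝ} (hC : 0 < C)
    (hf : ∀ t, HasDerivAt f (f' t) t)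
    (hge : ∀ t ≥ c, C ≤ f' t)
    (hbdd : ∀ t, |f t| ≤ R) : False := by
  have hR : 0 ≤ R := le_trans (abs_nonneg _) (hbdd c)
  set g : ℝ → ℝ := fun t => f t - C * t with hg
  have hgd : ∀ t, HasDerivAt g (f' t - C) t := fun t => by
    exact ((hf t).sub ((hasDerivAt_id t).const_mul C)).congr_deriv (by ring)
  have hmono : MonotoneOn g (Ici c) := by
    apply monotoneOn_of_deriv_nonneg (convex_Ici c)
    · exact fun t _ => (hgd t).continuousAt.continuousWithinAt
    · exact fun t _ => ((hgd t).differentiableAt).differentiableWithinAt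
    · intro t ht
      rw [interior_Ici] at ht
      rw [(hgd t).deriv]
      have := hge t (le_of_lt ht)
      linarith
  set T := c + (2*R + 1)/C with hT
  have hcT : c ≤ T := by
    have : 0 ≤ (2*R+1)/C := div_nonneg (by linarith) hC.le
    rw [hT]; linarith
  have h1 := hmono (self_mem_Ici) (mem_Ici.mpr hcT) hcT
  simp only [hg] at h1
  have h2 : C * (T - c) = 2*R + 1 := by
    rw [hT]; field_simp; ring
  have h3 := abs_le.mp (hbdd T)
  have h4 := abs_le.mp (hbdd c)
  nlinarith

/-- Core lemma: the velocity of a bounded-energy Duffing trajectory cannot stay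
positive forever. -/
lemma duffing_core {X V : ℝ → ℝ} {E0 R t₀ : ℝ}
    (hXd : ∀ t, HasDerivAt X (V t) t)
    (hVd : ∀ t, HasDerivAt V (-X t - X t ^ 3) t)
    (hE : ∀ t, V t ^ 2 = 2 * E0 - X t ^ 2 - X t ^ 4 / 2)
    (hE0 : 0 < E0)
    (hXb : ∀ t, |X t| ≤ R) (hVb : ∀ t, |V t| ≤ R)
    (hpos : ∀ t > t₀, 0 < V t) : False := by
  set c := t₀ + 1 with hc
  have hmono : MonotoneOn X (Ici c) := by
    apply monotoneOn_of_deriv_nonneg (convex_Ici c)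
    · exact fun t _ => (hXd t).continuousAt.continuousWithinAt
    · exact fun t _ => (hXd t).differentiableAt.differentiableWithinAt
    · intro t ht
      rw [interior_Ici, mem_Ioi] at ht
      rw [(hXd t).deriv]
      exact (hpos t (by rw [hc] at ht; linarith)).le
  set g : ℝ → ℝ := fun t => X (max t c) with hgdef
  have hgmono : Monotone g := fun s t hst =>
    hmono (mem_Ici.mpr (le_max_right s c)) (mem_Ici.mpr (le_max_right t c))
      (max_le_max hst le_rfl)
  have hgbdd : BddAbove (range g) := ⟨R, by rintro y ⟨t, rfl⟩; exact (abs_le.mp (hXb _)).2⟩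
  set L := ⨆ t, g t with hL
  have hgl : Tendsto g atTop (𝓝 L) := tendsto_atTop_ciSup hgmono hgbdd
  have hxl : Tendsto X atTop (𝓝 L) := by
    apply hgl.congr'
    filter_upwards [eventually_ge_atTop c] with t ht
    simp [hgdef, max_eq_left ht]
  have hv2l : Tendsto (fun t => V t ^ 2) atTop (𝓝 (2 * E0 - L ^ 2 - L ^ 4 / 2)) := by
    have h0 : Tendsto (fun t => 2 * E0 - X t ^ 2 - X t ^ 4 / 2) atTop
        (𝓝 (2 * E0 - L ^ 2 - L ^ 4 / 2)) := by
      exact (Tendsto.sub tendsto_const_nhds (hxl.pow 2)).sub ((hxl.pow 4).div_const 2)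
    exact h0.congr fun t => (hE t).symm
  set W2 := 2 * E0 - L ^ 2 - L ^ 4 / 2 with hW2def
  have hW2 : 0 ≤ W2 := ge_of_tendsto' hv2l fun t => sq_nonneg (V t)
  have hvl : Tendsto V atTop (𝓝 (Real.sqrt W2)) := by
    have h1 : Tendsto (fun t => Real.sqrt (V t ^ 2)) atTop (𝓝 (Real.sqrt W2)) :=
      (Real.continuous_sqrt.tendsto _).comp hv2l
    apply h1.congr'
    filter_upwards [eventually_gt_atTop t₀] with t ht
    rw [Real.sqrt_sq (hpos t ht).le]
  rcases hW2.lt_or_eq with h | h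
  · -- W2 > 0 : velocity stays away from 0, position escapes
    have hw : 0 < Real.sqrt W2 := Real.sqrt_pos.mpr h
    have hev : ∀ᶠ t in atTop, Real.sqrt W2 / 2 ≤ V t := by
      filter_upwards [hvl.eventually (eventually_gt_nhds (half_lt_self hw))] with t ht
      exact ht.le
    obtain ⟨c₁, hc₁⟩ := eventually_atTop.mp hev
    exact duffing_escape (half_pos hw) hXd hc₁ hXb
  · -- W2 = 0 : acceleration tends to a nonzero constant, velocity escapes
    have hL0 : L ≠ 0 := by
      intro h0
      rw [hW2def, h0] at h
      norm_num at h
      linarith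
    set c2 := -L - L ^ 3 with hc2
    have hc2ne : c2 ≠ 0 := by
      intro h0
      have hfac : L * (1 + L ^ 2) = 0 := by rw [hc2] at h0; nlinarith
      rcases mul_eq_zero.mp hfac with h1 | h1
      · exact hL0 h1
      · nlinarith [sq_nonneg L]
    have hV'l : Tendsto (fun t => -X t - X t ^ 3) atTop (𝓝 c2) :=
      (hxl.neg).sub (hxl.pow 3)
    rcases hc2ne.lt_or_gt with hneg | hposc
    · -- c2 < 0 : use -V
      have htend : Tendsto (fun t => X t + X t ^ 3) atTop (𝓝 (-c2)) := by
        have h2 := hV'l.neg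
        refine h2.congr fun t => by ring
      have hev : ∀ᶠ t in atTop, -c2 / 2 ≤ X t + X t ^ 3 := by
        filter_upwards [htend.eventually (eventually_gt_nhds
          (by linarith : -c2 / 2 < -c2))] with t ht
        exact ht.le
      obtain ⟨c₁, hc₁⟩ := eventually_atTop.mp hev
      refine duffing_escape (f := fun t => -V t) (f' := fun t => X t + X t ^ 3)
        (by linarith : (0:ℝ) < -c2 / 2) (fun t => ?_) hc₁ (fun t => by rw [abs_neg]; exact hVb t)
      have := (hVd t).neg
      exact this.congr_deriv (by ring)
    · -- c2 > 0
      have hev : ∀ᶠ t in atTop, c2 / 2 ≤ -X t - X t ^ 3 := by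
        filter_upwards [hV'l.eventually (eventually_gt_nhds (half_lt_self hposc))] with t ht
        exact ht.le
      obtain ⟨c₁, hc₁⟩ := eventually_atTop.mp hev
      exact duffing_escape (half_pos hposc) hVd hc₁ hVb

lemma duffing_lipschitz (R : ℝ) (hR : 0 ≤ R) :
    LipschitzOnWith (Real.toNNReal (1 + 3 * R ^ 2))
      (fun p : ℝ × ℝ => (p.2, -p.1 - p.1 ^ 3)) (Metric.closedBall 0 R) := by
  apply LipschitzOnWith.of_dist_le_mul
  intro p hp q hq
  rw [Real.coe_toNNReal _ (by positivity)]
  have hp1 : |p.1| ≤ R := by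
    have h := mem_closedBall_zero_iff.mp hp
    calc |p.1| = ‖p.1‖ := (Real.norm_eq_abs _).symm
    _ ≤ ‖p‖ := norm_fst_le p
    _ ≤ R := h
  have hq1 : |q.1| ≤ R := by
    have h := mem_closedBall_zero_iff.mp hq
    calc |q.1| = ‖q.1‖ := (Real.norm_eq_abs _).symm
    _ ≤ ‖q‖ := norm_fst_le q
    _ ≤ R := h
  simp only [Prod.dist_eq, Real.dist_eq]
  have key : |(-p.1 - p.1 ^ 3) - (-q.1 - q.1 ^ 3)| ≤ (1 + 3 * R ^ 2) * |p.1 - q.1| := by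
    have h1 : (-p.1 - p.1 ^ 3) - (-q.1 - q.1 ^ 3)
        = -((p.1 - q.1) * (1 + (p.1 ^ 2 + p.1 * q.1 + q.1 ^ 2))) := by ring
    rw [h1, abs_neg, abs_mul, mul_comm]
    have h2 : |1 + (p.1 ^ 2 + p.1 * q.1 + q.1 ^ 2)| ≤ 1 + 3 * R ^ 2 := by
      have hp' := abs_le.mp hp1
      have hq' := abs_le.mp hq1
      rw [abs_le]
      constructor <;> nlinarith [sq_nonneg (p.1 + q.1), sq_nonneg (p.1 - q.1)]
    exact mul_le_mul_of_nonneg_right h2 (abs_nonneg _)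
  apply max_le
  · have h3 := le_max_right |p.1 - q.1| |p.2 - q.2|
    nlinarith [abs_nonneg (p.2 - q.2), abs_nonneg (p.1 - q.1), sq_nonneg R,
      le_max_right |p.1 - q.1| |p.2 - q.2|]
  · calc |(-p.1 - p.1 ^ 3) - (-q.1 - q.1 ^ 3)| ≤ (1 + 3 * R ^ 2) * |p.1 - q.1| := key
    _ ≤ (1 + 3 * R ^ 2) * max |p.1 - q.1| |p.2 - q.2| := by
        apply mul_le_mul_of_nonneg_left (le_max_left _ _) (by positivity)

/-- Reflection symmetry at a critical point of the position. -/
lemma duffing_reflect {X V : ℝ → ℝ} {R a : ℝ}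
    (hXd : ∀ t, HasDerivAt X (V t) t)
    (hVd : ∀ t, HasDerivAt V (-X t - X t ^ 3) t)
    (hXb : ∀ t, |X t| ≤ R) (hVb : ∀ t, |V t| ≤ R)
    (ha : V a = 0) :
    ∀ s, X (2 * a - s) = X s ∧ V (2 * a - s) = -V s := by
  have hR : 0 ≤ R := le_trans (abs_nonneg _) (hXb 0)
  set F : ℝ → ℝ × ℝ → ℝ × ℝ := fun _ p => (p.2, -p.1 - p.1 ^ 3) with hF
  have hlip : ∀ t : ℝ, LipschitzOnWith (Real.toNNReal (1 + 3 * R ^ 2)) (F t)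
      ((fun _ : ℝ => Metric.closedBall (0 : ℝ × ℝ) R) t) := fun _ => duffing_lipschitz R hR
  set f : ℝ → ℝ × ℝ := fun t => (X t, V t) with hf
  set g : ℝ → ℝ × ℝ := fun t => (X (2 * a - t), -V (2 * a - t)) with hg
  have hmem : ∀ u w : ℝ, |u| ≤ R → |w| ≤ R → ((u, w) : ℝ × ℝ) ∈ Metric.closedBall (0 : ℝ × ℝ) R := by
    intro u w hu hw
    rw [mem_closedBall_zero_iff, Prod.norm_def]
    exact max_le (by rwa [Real.norm_eq_abs]) (by rwa [Real.norm_eq_abs])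
  have hf' : ∀ t : ℝ, HasDerivAt f (F t (f t)) t := fun t => HasDerivAt.prodMk (hXd t) (hVd t)
  have hinner : ∀ t : ℝ, HasDerivAt (fun t : ℝ => 2 * a - t) (-1) t := fun t => by
    exact ((hasDerivAt_const t (2 * a)).sub (hasDerivAt_id t)).congr_deriv (by ring)
  have hg1 : ∀ t : ℝ, HasDerivAt (fun t : ℝ => X (2 * a - t)) (-V (2 * a - t)) t := by
    intro t
    have h := (hXd (2 * a - t)).comp t (hinner t)
    have h2 : V (2 * a - t) * (-1) = -V (2 * a - t) := by ring
    rw [h2] at h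
    exact h
  have hg2 : ∀ t : ℝ, HasDerivAt (fun t : ℝ => -V (2 * a - t))
      (-X (2 * a - t) - X (2 * a - t) ^ 3) t := by
    intro t
    have h := ((hVd (2 * a - t)).comp t (hinner t)).neg
    exact h.congr_deriv (by ring)
  have hg' : ∀ t : ℝ, HasDerivAt g (F t (g t)) t := fun t => HasDerivAt.prodMk (hg1 t) (hg2 t)
  have heq : f a = g a := by
    simp only [hf, hg]
    rw [show 2 * a - a = a by ring, ha, neg_zero]
  intro s
  set b' : ℝ := |s - a| + 1 with hb'
  have hb'pos : 0 < b' := by positivity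
  have ha_mem : a ∈ Ioo (a - b') (a + b') := ⟨by linarith, by linarith⟩
  have hs_mem : s ∈ Ioo (a - b') (a + b') := by
    constructor
    · have := neg_abs_le (s - a)
      rw [hb']; linarith
    · have := le_abs_self (s - a)
      rw [hb']; linarith
  have huniq := ODE_solution_unique_of_mem_Ioo (fun t _ => hlip t) ha_mem
    (fun t _ => ⟨hf' t, hmem _ _ (hXb t) (hVb t)⟩)
    (fun t _ => ⟨hg' t, hmem _ _ (hXb _) (by rw [abs_neg]; exact hVb _)⟩)
    heq
  have h2 := huniq hs_mem
  simp only [hf, hg, Prod.mk.injEq] at h2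
  exact ⟨h2.1.symm, by linarith [h2.2]⟩

lemma duffing_exists_zero {X V : ℝ → ℝ} {E0 R : ℝ}
    (hXd : ∀ t, HasDerivAt X (V t) t)
    (hVd : ∀ t, HasDerivAt V (-X t - X t ^ 3) t)
    (hE : ∀ t, V t ^ 2 = 2 * E0 - X t ^ 2 - X t ^ 4 / 2)
    (hE0 : 0 < E0)
    (hXb : ∀ t, |X t| ≤ R) (hVb : ∀ t, |V t| ≤ R)
    (t₀ : ℝ) : ∃ a > t₀, V a = 0 := by
  by_contra hcon
  push_neg at hcon
  have ivt : ∀ s t, t₀ < s → t₀ < t → V s < 0 → 0 < V t → False := by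
    intro s t hs ht hVs hVt
    obtain ⟨u, hu, hu0⟩ := intermediate_value_uIcc
      (fun u _ => (hVd u).continuousAt.continuousWithinAt)
      (mem_uIcc.mpr (Or.inl ⟨hVs.le, hVt.le⟩))
    exact hcon u (lt_of_lt_of_le (lt_min hs ht) hu.1) hu0
  have hsign : (∀ t > t₀, 0 < V t) ∨ (∀ t > t₀, V t < 0) := by
    rcases lt_trichotomy (V (t₀ + 1)) 0 with h1 | h1 | h1
    · right; intro t ht
      rcases lt_trichotomy (V t) 0 with h2 | h2 | h2
      · exact h2
      · exact absurd h2 (hcon t ht)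
      · exact absurd (ivt (t₀ + 1) t (by linarith) ht h1 h2) id
    · exact absurd h1 (hcon _ (by linarith))
    · left; intro t ht
      rcases lt_trichotomy (V t) 0 with h2 | h2 | h2
      · exact absurd (ivt t (t₀ + 1) ht (by linarith) h2 h1) id
      · exact absurd h2 (hcon t ht)
      · exact h2
  rcases hsign with hpos | hneg
  · exact duffing_core hXd hVd hE hE0 hXb hVb hpos
  · refine duffing_core (X := fun t => -X t) (V := fun t => -V t) (E0 := E0) (R := R)
      (fun t => (hXd t).neg) (fun t => ?_) (fun t => by linear_combination hE t) hE0
      (fun t => by rw [abs_neg]; exact hXb t) (fun t => by rw [abs_neg]; exact hVb t)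
      (fun t ht => by simpa using (hneg t ht))
    have h := (hVd t).neg
    exact h.congr_deriv (by ring)


/-- Every twice differentiable solution of the unforced, undamped Duffing
equation `x'' + x + x³ = 0` with `(x(0), x'(0)) ≠ (0, 0)` is periodic: there exists `T > 0`
with `x(t + T) = x(t)` and `x'(t + T) = x'(t)` for all `t`. -/
theorem duffing_unforced_periodic (x : ℝ → ℝ)
    (hx1 : ∀ t, DifferentiableAt ℝ x t)
    (hx2 : ∀ t, DifferentiableAt ℝ (deriv x) t)
    (hode : ∀ t, deriv (deriv x) t + x t + (x t) ^ 3 = 0)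
    (hnz : (x 0, deriv x 0) ≠ (0, 0)) :
    ∃ T > 0, ∀ t : ℝ, x (t + T) = x t ∧ deriv x (t + T) = deriv x t := by
  set v := deriv x with hv
  have hxd : ∀ t, HasDerivAt x (v t) t := fun t => (hx1 t).hasDerivAt
  have hvd : ∀ t, HasDerivAt v (-x t - x t ^ 3) t := fun t => by
    have h := (hx2 t).hasDerivAt
    have h2 : deriv v t = -x t - x t ^ 3 := by linarith [hode t]
    rwa [h2] at h
  set E : ℝ → ℝ := fun t => v t ^ 2 / 2 + x t ^ 2 / 2 + x t ^ 4 / 4 with hE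
  have hEd : ∀ t, HasDerivAt E 0 t := fun t => by
    have h := ((((hvd t).pow 2).div_const 2).add (((hxd t).pow 2).div_const 2)).add
      (((hxd t).pow 4).div_const 4)
    exact h.congr_deriv (by simp; ring)
  have hEconst : ∀ t, E t = E 0 := fun t =>
    is_const_of_deriv_eq_zero (fun u => (hEd u).differentiableAt) (fun u => (hEd u).deriv) t 0
  have hE0eq : E 0 = v 0 ^ 2 / 2 + x 0 ^ 2 / 2 + x 0 ^ 4 / 4 := by simp only [hE]
  have hE0pos : 0 < E 0 := by
    have h0 : 0 ≤ E 0 := by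
      simp only [hE]
      positivity
    rcases h0.lt_or_eq with h | h
    · exact h
    · exfalso
      simp only [hE] at h
      have hx0 : x 0 = 0 := by nlinarith [sq_nonneg (x 0), sq_nonneg (v 0), sq_nonneg (x 0 ^ 2)]
      have hv0 : v 0 = 0 := by nlinarith [sq_nonneg (x 0), sq_nonneg (x 0 ^ 2)]
      exact hnz (by rw [hx0, hv0])
  have hEident : ∀ t, v t ^ 2 = 2 * E 0 - x t ^ 2 - x t ^ 4 / 2 := fun t => by
    have h := hEconst t
    simp only [hE] at h
    linarith [hE0eq]
  obtain ⟨E0, hE0def⟩ : ∃ z : ℝ, E 0 = z := ⟨_, rfl⟩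
  rw [hE0def] at hE0pos
  simp only [hE0def] at hEident
  set R := Real.sqrt (2 * E0) with hR
  have hxb : ∀ t, |x t| ≤ R := fun t => by
    have h4 : 0 ≤ x t ^ 4 := by positivity
    have h2 : x t ^ 2 ≤ 2 * E0 := by linarith [hEident t, sq_nonneg (v t), h4]
    calc |x t| = Real.sqrt (x t ^ 2) := (Real.sqrt_sq_eq_abs _).symm
    _ ≤ R := Real.sqrt_le_sqrt h2
  have hvb : ∀ t, |v t| ≤ R := fun t => by
    have h4 : 0 ≤ x t ^ 4 := by positivity
    have h2 : v t ^ 2 ≤ 2 * E0 := by linarith [hEident t, sq_nonneg (x t), h4]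
    calc |v t| = Real.sqrt (v t ^ 2) := (Real.sqrt_sq_eq_abs _).symm
    _ ≤ R := Real.sqrt_le_sqrt h2
  obtain ⟨a, _, ha⟩ := duffing_exists_zero hxd hvd hEident hE0pos hxb hvb 0
  obtain ⟨b, hb_gt, hb⟩ := duffing_exists_zero hxd hvd hEident hE0pos hxb hvb a
  have Ra := duffing_reflect hxd hvd hxb hvb ha
  have Rb := duffing_reflect hxd hvd hxb hvb hb
  refine ⟨2 * (b - a), by linarith, fun t => ?_⟩
  have h1 := Rb (t + 2 * (b - a))
  rw [show 2 * b - (t + 2 * (b - a)) = 2 * a - t by ring] at h1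
  have h2 := Ra t
  exact ⟨h1.1.symm.trans h2.1, by linarith [h1.2, h2.2]⟩
end

section
/- The function T : (0, ∞) → ℝ defined by T(a) = 4 ∫₀¹ ds / √((1 − s²) + (a²/2)(1 − s⁴)) is strictly decreasing. Consequently the natural frequency 2π/T(a) of the unforced, undamped Duffing oscillator is a strictly increasing function of the oscillation amplitude a (hardening spring). -/
open Real Set MeasureTheory ENNReal

noncomputable def df (c : ℝ) : ℝ → ℝ := fun s => 1 / Real.sqrt ((1 - s ^ 2) + c * (1 - s ^ 4))

lemma df_meas (c : ℝ) : Measurable (df c) := by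
  unfold df
  exact measurable_const.div
    ((Real.continuous_sqrt.comp (by continuity)).measurable)

lemma df_nonneg (c : ℝ) (s : ℝ) : 0 ≤ df c s := by
  unfold df; positivity

lemma inner_pos {c s : ℝ} (hc : 0 ≤ c) (hs0 : 0 ≤ s) (hs1 : s < 1) :
    0 < (1 - s ^ 2) + c * (1 - s ^ 4) := by
  have h2 : s ^ 2 < 1 := by nlinarith
  have h4 : s ^ 4 ≤ 1 := by nlinarith [sq_nonneg (s ^ 2)]
  have := mul_nonneg hc (by linarith : (0:ℝ) ≤ 1 - s ^ 4)
  linarith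

lemma df_le (c : ℝ) (hc : 0 ≤ c) {s : ℝ} (hs : s ∈ Ioc (0:ℝ) 1) :
    df c s ≤ (1 - s) ^ (-(1/2) : ℝ) := by
  rcases eq_or_lt_of_le hs.2 with h1 | h1
  · subst h1
    norm_num [df, Real.zero_rpow]
  · have h0 : 0 < 1 - s := by linarith
    rw [Real.rpow_neg h0.le, ← Real.sqrt_eq_rpow, ← one_div]
    have hle : 1 - s ≤ (1 - s ^ 2) + c * (1 - s ^ 4) := by
      have h2 : s ^ 2 ≤ 1 := by nlinarith [hs.1.le]
      have h4 : (0:ℝ) ≤ 1 - s ^ 4 := by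
        nlinarith [mul_nonneg (by linarith : (0:ℝ) ≤ 1 - s ^ 2) (by positivity : (0:ℝ) ≤ 1 + s ^ 2)]
      have := mul_nonneg hc h4
      nlinarith [mul_nonneg hs.1.le h0.le]
    have := Real.sqrt_le_sqrt hle
    exact one_div_le_one_div_of_le (Real.sqrt_pos.mpr h0) this

lemma df_integrable {c : ℝ} (hc : 0 ≤ c) : IntervalIntegrable (df c) volume 0 1 := by
  rw [intervalIntegrable_iff_integrableOn_Ioc_of_le (by norm_num)]
  have hG : IntegrableOn (fun s : ℝ => (1 - s) ^ (-(1/2) : ℝ)) (Ioc 0 1) volume := by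
    have h1 : IntervalIntegrable (fun x : ℝ => x ^ (-(1/2) : ℝ)) volume 0 1 :=
      intervalIntegral.intervalIntegrable_rpow' (by norm_num)
    have h2 := (h1.comp_sub_left 1).symm
    simp only [sub_zero, sub_self] at h2
    rw [intervalIntegrable_iff_integrableOn_Ioc_of_le (by norm_num)] at h2
    exact h2
  refine hG.integrable.mono ((df_meas c).aestronglyMeasurable.restrict) ?_
  refine ae_restrict_of_forall_mem measurableSet_Ioc fun s hs => ?_
  rw [Real.norm_eq_abs, abs_of_nonneg (df_nonneg c s)]
  exact (df_le c hc hs).trans (le_abs_self _)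

lemma df_sub_integral_pos {c d : ℝ} (hc : 0 ≤ c) (hcd : c < d) :
    0 < ∫ s in Ioc (0:ℝ) 1, (df c s - df d s) := by
  have hd : 0 ≤ d := hc.trans hcd.le
  have hIc := (intervalIntegrable_iff_integrableOn_Ioc_of_le (by norm_num : (0:ℝ) ≤ 1)).mp
    (df_integrable hc)
  have hId := (intervalIntegrable_iff_integrableOn_Ioc_of_le (by norm_num : (0:ℝ) ≤ 1)).mp
    (df_integrable hd)
  have hnonneg : 0 ≤ᵐ[volume.restrict (Ioc (0:ℝ) 1)] fun s => df c s - df d s := by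
    refine ae_restrict_of_forall_mem measurableSet_Ioc fun s hs => ?_
    rcases eq_or_lt_of_le hs.2 with h1 | h1
    · subst h1
      norm_num [df]
    · have hpos := inner_pos hc hs.1.le h1
      have hle : (1 - s ^ 2) + c * (1 - s ^ 4) ≤ (1 - s ^ 2) + d * (1 - s ^ 4) := by
        have h4 : (0:ℝ) ≤ 1 - s ^ 4 := by
          have h2 : s ^ 2 ≤ 1 := by nlinarith [hs.1.le, h1.le]
          nlinarith [mul_nonneg (by linarith : (0:ℝ) ≤ 1 - s ^ 2) (by positivity : (0:ℝ) ≤ 1 + s ^ 2)]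
        nlinarith [mul_le_mul_of_nonneg_right hcd.le h4]
      have := one_div_le_one_div_of_le (Real.sqrt_pos.mpr hpos) (Real.sqrt_le_sqrt hle)
      simpa [df] using this
  rw [setIntegral_pos_iff_support_of_nonneg_ae hnonneg (hIc.sub hId)]
  have hsub : Ioo (0:ℝ) 1 ⊆ Function.support (fun s => df c s - df d s) ∩ Ioc 0 1 := by
    intro s hs
    refine ⟨?_, hs.1, hs.2.le⟩
    have hpos := inner_pos hc hs.1.le hs.2
    have hlt : (1 - s ^ 2) + c * (1 - s ^ 4) < (1 - s ^ 2) + d * (1 - s ^ 4) := by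
      have h4 : (0:ℝ) < 1 - s ^ 4 := by
        have h2 : s ^ 2 < 1 := by nlinarith [hs.1, hs.2]
        nlinarith [mul_pos (by linarith : (0:ℝ) < 1 - s ^ 2) (by positivity : (0:ℝ) < 1 + s ^ 2)]
      nlinarith [mul_lt_mul_of_pos_right hcd h4]
    have := one_div_lt_one_div_of_lt (Real.sqrt_pos.mpr hpos) (Real.sqrt_lt_sqrt hpos.le hlt)
    simp only [Function.mem_support, df]
    intro h
    rw [sub_eq_zero] at h
    exact absurd h.symm (ne_of_lt this)
  calc (0:ℝ≥0∞) < volume (Ioo (0:ℝ) 1) := by simp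
    _ ≤ _ := measure_mono hsub

lemma df_integral_pos {c : ℝ} (hc : 0 ≤ c) : 0 < ∫ s in (0:ℝ)..1, df c s := by
  rw [intervalIntegral.integral_of_le (by norm_num)]
  have hIc := (intervalIntegrable_iff_integrableOn_Ioc_of_le (by norm_num : (0:ℝ) ≤ 1)).mp
    (df_integrable hc)
  rw [setIntegral_pos_iff_support_of_nonneg_ae
    (ae_restrict_of_forall_mem measurableSet_Ioc fun s _ => df_nonneg c s) hIc]
  have hsub : Ioo (0:ℝ) 1 ⊆ Function.support (df c) ∩ Ioc 0 1 := by
    intro s hs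
    refine ⟨?_, hs.1, hs.2.le⟩
    have hpos := inner_pos hc hs.1.le hs.2
    simp only [Function.mem_support, df, one_div, ne_eq, inv_eq_zero]
    exact fun h => absurd h (ne_of_gt (Real.sqrt_pos.mpr hpos))
  calc (0:ℝ≥0∞) < volume (Ioo (0:ℝ) 1) := by simp
    _ ≤ _ := measure_mono hsub

lemma df_integral_lt {c d : ℝ} (hc : 0 ≤ c) (hcd : c < d) :
    ∫ s in (0:ℝ)..1, df d s < ∫ s in (0:ℝ)..1, df c s := by
  have hd : 0 ≤ d := hc.trans hcd.le
  have hIc := (intervalIntegrable_iff_integrableOn_Ioc_of_le (by norm_num : (0:ℝ) ≤ 1)).mp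
    (df_integrable hc)
  have hId := (intervalIntegrable_iff_integrableOn_Ioc_of_le (by norm_num : (0:ℝ) ≤ 1)).mp
    (df_integrable hd)
  have key := df_sub_integral_pos hc hcd
  rw [integral_sub hIc hId] at key
  rw [intervalIntegral.integral_of_le (by norm_num : (0:ℝ) ≤ 1),
    intervalIntegral.integral_of_le (by norm_num : (0:ℝ) ≤ 1)]
  linarith

/-- The amplitude-dependent natural period
`T(a) = 4 ∫₀¹ ds / √((1 − s²) + (a²/2)(1 − s⁴))` of the unforced, undamped Duffing
oscillator is strictly decreasing on `(0, ∞)`; consequently the natural frequency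
`2π/T(a)` is strictly increasing in the amplitude `a` (hardening spring). -/
theorem duffing_period_strictAnti :
    let T : ℝ → ℝ := fun a =>
      4 * ∫ s in (0:ℝ)..1, 1 / Real.sqrt ((1 - s ^ 2) + (a ^ 2 / 2) * (1 - s ^ 4))
    StrictAntiOn T (Ioi 0) ∧ StrictMonoOn (fun a => 2 * π / T a) (Ioi 0) := by
  intro T
  have hT : ∀ a : ℝ, T a = 4 * ∫ s in (0:ℝ)..1, df (a ^ 2 / 2) s := fun a => rfl
  have hanti : StrictAntiOn T (Ioi 0) := by
    intro a ha b hb hab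
    rw [hT, hT]
    have hc : (0:ℝ) ≤ a ^ 2 / 2 := by positivity
    have hcd : a ^ 2 / 2 < b ^ 2 / 2 := by
      have : a ^ 2 < b ^ 2 := by nlinarith [mem_Ioi.mp ha, mem_Ioi.mp hb]
      linarith
    have := df_integral_lt hc hcd
    linarith
  have hpos : ∀ a ∈ Ioi (0:ℝ), 0 < T a := by
    intro a _
    rw [hT]
    have := df_integral_pos (c := a ^ 2 / 2) (by positivity)
    linarith
  refine ⟨hanti, fun a ha b hb hab => ?_⟩
  exact div_lt_div_of_pos_left (by positivity) (hpos b hb) (hanti ha hb hab)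
end

section
/- The natural frequency function ν : (0, ∞) → ℝ, ν(a) = 2π/T(a) with T(a) = 4 ∫₀¹ ds / √((1 − s²) + (a²/2)(1 − s⁴)), is a continuous strictly increasing bijection from (0, ∞) onto (1, ∞). In particular, for every integer k ≥ 1 and every ω > 0 with kω > 1 there exists a unique amplitude a > 0 satisfying the subharmonic resonance condition ω = ν(a)/k. -/
open Real Set MeasureTheory intervalIntegral

noncomputable def duffD (a s : ℝ) : ℝ := (1 - s ^ 2) + (a ^ 2 / 2) * (1 - s ^ 4)

noncomputable def duffG (a s : ℝ) : ℝ := 1 / Real.sqrt (duffD a s)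

noncomputable def duffI (a : ℝ) : ℝ := ∫ s in (0:ℝ)..1, duffG a s

lemma duffD_ge (a : ℝ) {s : ℝ} (hs : s ∈ Icc (0:ℝ) 1) : 1 - s ^ 2 ≤ duffD a s := by
  have h4 : 0 ≤ (1 - s) * ((1 + s) * (1 + s ^ 2)) :=
    mul_nonneg (by linarith [hs.2]) (by nlinarith [hs.1, sq_nonneg s])
  have h1 : 0 ≤ 1 - s ^ 4 := by nlinarith [h4]
  have h2 : (0:ℝ) ≤ a ^ 2 / 2 := by positivity
  have := mul_nonneg h2 h1
  unfold duffD; linarith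

lemma duffD_pos (a : ℝ) {s : ℝ} (hs : s ∈ Ico (0:ℝ) 1) : 0 < duffD a s := by
  have h1 : 0 < 1 - s ^ 2 := by nlinarith [hs.1, hs.2]
  have := duffD_ge a ⟨hs.1, hs.2.le⟩
  linarith

lemma duffG_le_bound (a : ℝ) {s : ℝ} (hs : s ∈ Icc (0:ℝ) 1) :
    duffG a s ≤ 1 / Real.sqrt (1 - s ^ 2) := by
  rcases hs.2.eq_or_lt with h1 | h1
  · subst h1
    norm_num [duffG, duffD]
  · have h2 : 0 < 1 - s ^ 2 := by nlinarith [hs.1]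
    exact one_div_le_one_div_of_le (Real.sqrt_pos.2 h2)
      (Real.sqrt_le_sqrt (duffD_ge a hs))

lemma bound_integrableOn :
    IntegrableOn (fun s : ℝ => 1 / Real.sqrt (1 - s ^ 2)) (Ioc 0 1) volume := by
  have h0 : IntervalIntegrable (fun x : ℝ => x ^ (-(1/2) : ℝ)) volume 1 0 :=
    intervalIntegral.intervalIntegrable_rpow' (by norm_num)
  have h1 := h0.comp_sub_left 1
  norm_num at h1
  rw [intervalIntegrable_iff_integrableOn_Ioc_of_le zero_le_one] at h1
  refine MeasureTheory.Integrable.mono h1 ?_ ?_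
  · refine Measurable.aestronglyMeasurable ?_
    have : Measurable fun s : ℝ => Real.sqrt (1 - s ^ 2) :=
      (Real.continuous_sqrt.comp (by continuity)).measurable
    exact measurable_const.div this
  · refine (ae_restrict_iff' measurableSet_Ioc).2 (ae_of_all _ fun s hs => ?_)
    have hs1 : s ≤ 1 := hs.2
    have hs0 : 0 < s := hs.1
    have h1s : (0:ℝ) ≤ 1 - s := by linarith
    have hrw : (1 - s) ^ (-(1/2) : ℝ) = 1 / Real.sqrt (1 - s) := by
      rw [Real.rpow_neg h1s, Real.sqrt_eq_rpow]; norm_num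
    rw [hrw]
    rw [Real.norm_eq_abs, Real.norm_eq_abs, abs_of_nonneg (by positivity),
      abs_of_nonneg (by positivity)]
    rcases hs1.eq_or_lt with h | h
    · subst h; norm_num
    · have h2 : 0 < 1 - s := by linarith
      have h3 : 1 - s ≤ 1 - s ^ 2 := by nlinarith
      exact one_div_le_one_div_of_le (Real.sqrt_pos.2 h2) (Real.sqrt_le_sqrt h3)

lemma bound_intervalIntegrable :
    IntervalIntegrable (fun s : ℝ => 1 / Real.sqrt (1 - s ^ 2)) volume 0 1 := by
  rw [intervalIntegrable_iff_integrableOn_Ioc_of_le zero_le_one]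
  exact bound_integrableOn

lemma bound_integral : ∫ s in (0:ℝ)..1, 1 / Real.sqrt (1 - s ^ 2) = π / 2 := by
  set f : ℝ → ℝ := fun s => 1 / Real.sqrt (1 - s ^ 2) with hf
  set t : ℕ → ℝ := fun n => 1 - 1 / (n + 1) with ht
  have htmem : ∀ n : ℕ, t n ∈ Ico (0:ℝ) 1 := by
    intro n
    have h1 : 0 < 1 / ((n:ℝ) + 1) := by positivity
    have h2 : 1 / ((n:ℝ) + 1) ≤ 1 := by
      rw [div_le_one (by positivity)]; exact le_add_of_nonneg_left (Nat.cast_nonneg n)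
    have htn : t n = 1 - 1 / ((n:ℝ) + 1) := rfl
    rw [mem_Ico, htn]
    exact ⟨by linarith, by linarith⟩
  have hsm : ∀ n : ℕ, MeasurableSet (Ioc (0:ℝ) (t n)) := fun n => measurableSet_Ioc
  have hmono : Monotone fun n : ℕ => Ioc (0:ℝ) (t n) := by
    intro m n hmn
    apply Ioc_subset_Ioc le_rfl
    have : 1 / ((n:ℝ) + 1) ≤ 1 / ((m:ℝ) + 1) := by
      apply one_div_le_one_div_of_le (by positivity)
      exact_mod_cast Nat.succ_le_succ hmn
    show (1:ℝ) - 1 / ((m:ℝ) + 1) ≤ 1 - 1 / ((n:ℝ) + 1)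
    linarith
  have hunion : (⋃ n : ℕ, Ioc (0:ℝ) (t n)) = Ioo 0 1 := by
    ext x
    simp only [mem_iUnion, mem_Ioc, mem_Ioo]
    constructor
    · rintro ⟨n, hx0, hxn⟩
      exact ⟨hx0, lt_of_le_of_lt hxn (htmem n).2⟩
    · rintro ⟨hx0, hx1⟩
      obtain ⟨n, hn⟩ := exists_nat_one_div_lt (show (0:ℝ) < 1 - x by linarith)
      exact ⟨n, hx0, show x ≤ 1 - 1 / ((n:ℝ) + 1) by linarith⟩
  have hfi : IntegrableOn f (⋃ n : ℕ, Ioc (0:ℝ) (t n)) volume := by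
    rw [hunion]; exact bound_integrableOn.mono_set Ioo_subset_Ioc_self
  have htend := MeasureTheory.tendsto_setIntegral_of_monotone hsm hmono hfi
  have hval : ∀ n : ℕ, (∫ s in Ioc (0:ℝ) (t n), f s) = Real.arcsin (t n) := by
    intro n
    have h0n : (0:ℝ) ≤ t n := (htmem n).1
    have h1n : t n < 1 := (htmem n).2
    rw [← intervalIntegral.integral_of_le h0n]
    have hderiv : ∀ x ∈ uIcc (0:ℝ) (t n), HasDerivAt Real.arcsin (f x) x := by
      intro x hx
      rw [uIcc_of_le h0n] at hx
      have hx1 : x < 1 := lt_of_le_of_lt hx.2 h1n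
      exact Real.hasDerivAt_arcsin (by linarith [hx.1]) (ne_of_lt hx1)
    have hint : IntervalIntegrable f volume 0 (t n) := by
      apply ContinuousOn.intervalIntegrable
      rw [uIcc_of_le h0n]
      intro x hx
      have hx1 : x < 1 := lt_of_le_of_lt hx.2 h1n
      have h2 : 0 < 1 - x ^ 2 := by nlinarith [hx.1]
      apply ContinuousWithinAt.div continuousWithinAt_const
      · exact (Real.continuous_sqrt.comp (by continuity)).continuousWithinAt
      · exact (Real.sqrt_pos.2 h2).ne'
    have := intervalIntegral.integral_eq_sub_of_hasDerivAt hderiv hint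
    rw [this, Real.arcsin_zero, sub_zero]
  have htlim : Filter.Tendsto t Filter.atTop (nhds 1) := by
    have : Filter.Tendsto (fun n : ℕ => 1 / ((n:ℝ) + 1)) Filter.atTop (nhds 0) :=
      tendsto_one_div_add_atTop_nhds_zero_nat
    have := Filter.Tendsto.const_sub (1:ℝ) this
    simpa [ht] using this
  have harc : Filter.Tendsto (fun n : ℕ => Real.arcsin (t n)) Filter.atTop (nhds (π / 2)) := by
    have := (Real.continuous_arcsin.continuousAt (x := (1:ℝ))).tendsto.comp htlim
    rw [Real.arcsin_one] at this; exact this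
  have heq : (∫ s in ⋃ n : ℕ, Ioc (0:ℝ) (t n), f s) = π / 2 := by
    apply tendsto_nhds_unique _ harc
    have : (fun n : ℕ => ∫ s in Ioc (0:ℝ) (t n), f s) = fun n => Real.arcsin (t n) :=
      funext hval
    rw [← this]; exact htend
  rw [intervalIntegral.integral_of_le zero_le_one, MeasureTheory.integral_Ioc_eq_integral_Ioo,
    ← hunion, heq]

lemma duffG_measurable (a : ℝ) : Measurable (duffG a) := by
  have : Measurable fun s : ℝ => Real.sqrt (duffD a s) :=
    (Real.continuous_sqrt.comp (by unfold duffD; continuity)).measurable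
  exact measurable_const.div this

lemma duffG_nonneg (a s : ℝ) : 0 ≤ duffG a s := by
  unfold duffG; positivity

lemma duffG_intervalIntegrable (a : ℝ) : IntervalIntegrable (duffG a) volume 0 1 := by
  rw [intervalIntegrable_iff_integrableOn_Ioc_of_le zero_le_one]
  refine MeasureTheory.Integrable.mono bound_integrableOn
    ((duffG_measurable a).aestronglyMeasurable) ?_
  refine (ae_restrict_iff' measurableSet_Ioc).2 (ae_of_all _ fun s hs => ?_)
  rw [Real.norm_eq_abs, Real.norm_eq_abs, abs_of_nonneg (duffG_nonneg a s),
    abs_of_nonneg (by positivity)]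
  exact duffG_le_bound a ⟨hs.1.le, hs.2⟩

lemma duffI_pos (a : ℝ) : 0 < duffI a := by
  apply intervalIntegral_pos_of_pos_on (duffG_intervalIntegrable a) _ zero_lt_one
  intro x hx
  have hD := duffD_pos a ⟨hx.1.le, hx.2⟩
  unfold duffG
  positivity

lemma duffI_strictAnti {a b : ℝ} (ha : 0 ≤ a) (hab : a < b) : duffI b < duffI a := by
  have hpos : 0 < ∫ s in (0:ℝ)..1, (duffG a s - duffG b s) := by
    apply intervalIntegral_pos_of_pos_on
      ((duffG_intervalIntegrable a).sub (duffG_intervalIntegrable b)) _ zero_lt_one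
    intro x hx
    have hDa := duffD_pos a ⟨hx.1.le, hx.2⟩
    have hDb := duffD_pos b ⟨hx.1.le, hx.2⟩
    have hx2 : x ^ 2 < 1 := by nlinarith [hx.1, hx.2]
    have hx4 : 0 < 1 - x ^ 4 := by nlinarith [sq_nonneg x, hx2]
    have hlt : duffD a x < duffD b x := by
      unfold duffD
      have : a ^ 2 < b ^ 2 := by nlinarith
      nlinarith
    have hsq : Real.sqrt (duffD a x) < Real.sqrt (duffD b x) :=
      Real.sqrt_lt_sqrt hDa.le hlt
    have := one_div_lt_one_div_of_lt (Real.sqrt_pos.2 hDa) hsq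
    unfold duffG
    linarith
  rw [intervalIntegral.integral_sub (duffG_intervalIntegrable a)
    (duffG_intervalIntegrable b)] at hpos
  unfold duffI
  linarith

lemma duffI_continuous : Continuous duffI := by
  have key : Continuous fun a : ℝ => ∫ s in Ioc (0:ℝ) 1, duffG a s := by
    apply MeasureTheory.continuous_of_dominated
      (bound := fun s : ℝ => 1 / Real.sqrt (1 - s ^ 2))
    · exact fun a => (duffG_measurable a).aestronglyMeasurable
    · intro a
      refine (ae_restrict_iff' measurableSet_Ioc).2 (ae_of_all _ fun s hs => ?_)
      rw [Real.norm_eq_abs, abs_of_nonneg (duffG_nonneg a s)]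
      exact duffG_le_bound a ⟨hs.1.le, hs.2⟩
    · exact bound_integrableOn
    · refine (ae_restrict_iff' measurableSet_Ioc).2 (ae_of_all _ fun s hs => ?_)
      rcases hs.2.eq_or_lt with h1 | h1
      · subst h1
        have : (fun a : ℝ => duffG a 1) = fun _ => 0 := by
          funext a; norm_num [duffG, duffD]
        rw [this]; exact continuous_const
      · have hD : ∀ a : ℝ, 0 < duffD a s := fun a => duffD_pos a ⟨hs.1.le, h1⟩
        apply Continuous.div continuous_const
        · exact Real.continuous_sqrt.comp (by unfold duffD; continuity)
        · exact fun a => (Real.sqrt_pos.2 (hD a)).ne'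
  have heq : duffI = fun a => ∫ s in Ioc (0:ℝ) 1, duffG a s :=
    funext fun a => intervalIntegral.integral_of_le zero_le_one
  rw [heq]; exact key

lemma duffI_le {a : ℝ} (ha : 0 < a) : duffI a ≤ Real.sqrt 2 / a * (π / 2) := by
  have hs2 : (0:ℝ) < Real.sqrt 2 := by positivity
  have hb : ∀ s ∈ Icc (0:ℝ) 1, duffG a s ≤ Real.sqrt 2 / a * (1 / Real.sqrt (1 - s ^ 2)) := by
    intro s hs
    rcases hs.2.eq_or_lt with h1 | h1
    · subst h1
      norm_num [duffG, duffD]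
    · have h2 : 0 < 1 - s ^ 2 := by nlinarith [hs.1]
      have h4 : 1 - s ^ 2 ≤ 1 - s ^ 4 := by nlinarith [hs.1, sq_nonneg s]
      have hDge : a ^ 2 / 2 * (1 - s ^ 2) ≤ duffD a s := by
        unfold duffD
        nlinarith [mul_le_mul_of_nonneg_left h4 (by positivity : (0:ℝ) ≤ a ^ 2 / 2)]
      have hsq : Real.sqrt (a ^ 2 / 2 * (1 - s ^ 2)) ≤ Real.sqrt (duffD a s) :=
        Real.sqrt_le_sqrt hDge
      have hval : Real.sqrt (a ^ 2 / 2 * (1 - s ^ 2))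
          = a / Real.sqrt 2 * Real.sqrt (1 - s ^ 2) := by
        rw [show a ^ 2 / 2 * (1 - s ^ 2) = (a / Real.sqrt 2 * Real.sqrt (1 - s ^ 2)) ^ 2 by
          rw [mul_pow, div_pow, Real.sq_sqrt (by norm_num : (0:ℝ) ≤ 2),
            Real.sq_sqrt h2.le]]
        exact Real.sqrt_sq (by positivity)
      have hpos : 0 < a / Real.sqrt 2 * Real.sqrt (1 - s ^ 2) := by positivity
      have hle : a / Real.sqrt 2 * Real.sqrt (1 - s ^ 2) ≤ Real.sqrt (duffD a s) := by
        rw [← hval]; exact hsq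
      have key := one_div_le_one_div_of_le hpos hle
      have hrw : Real.sqrt 2 / a * (1 / Real.sqrt (1 - s ^ 2))
          = 1 / (a / Real.sqrt 2 * Real.sqrt (1 - s ^ 2)) := by
        have h3 : Real.sqrt (1 - s ^ 2) ≠ 0 := (Real.sqrt_pos.2 h2).ne'
        field_simp
      unfold duffG
      rw [hrw]
      exact key
  have hmono := intervalIntegral.integral_mono_on zero_le_one (duffG_intervalIntegrable a)
    (bound_intervalIntegrable.const_mul (Real.sqrt 2 / a)) hb
  calc duffI a ≤ ∫ s in (0:ℝ)..1, Real.sqrt 2 / a * (1 / Real.sqrt (1 - s ^ 2)) := hmono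
    _ = Real.sqrt 2 / a * (π / 2) := by
        rw [intervalIntegral.integral_const_mul, bound_integral]

lemma duffI_zero : duffI 0 = π / 2 := by
  unfold duffI
  rw [← bound_integral]
  apply intervalIntegral.integral_congr
  intro s _
  norm_num [duffG, duffD]

/-- The natural frequency `ν(a) = 2π/T(a)`, with
`T(a) = 4 ∫₀¹ ds / √((1 − s²) + (a²/2)(1 − s⁴))`, is a continuous strictly increasing
bijection from `(0, ∞)` onto `(1, ∞)`; in particular, for every integer `k ≥ 1` and every
`ω > 0` with `kω > 1` there exists a unique amplitude `a > 0` satisfying the subharmonic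
resonance condition `ω = ν(a)/k`. -/
theorem duffing_natural_frequency_bijection :
    let T : ℝ → ℝ := fun a =>
      4 * ∫ s in (0:ℝ)..1, 1 / Real.sqrt ((1 - s ^ 2) + (a ^ 2 / 2) * (1 - s ^ 4))
    let ν : ℝ → ℝ := fun a => 2 * π / T a
    ContinuousOn ν (Ioi 0) ∧ StrictMonoOn ν (Ioi 0) ∧ BijOn ν (Ioi 0) (Ioi 1) ∧
      ∀ k : ℕ, 1 ≤ k → ∀ ω : ℝ, 0 < ω → 1 < (k : ℝ) * ω →
        ∃! a : ℝ, 0 < a ∧ ω = ν a / k := by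
  intro T ν
  have hπ := Real.pi_pos
  have hν : ∀ a, ν a = 2 * π / (4 * duffI a) := fun a => rfl
  have hIpos : ∀ a, 0 < duffI a := duffI_pos
  -- continuity
  have hνc : Continuous ν := by
    have h : ν = fun a => 2 * π / (4 * duffI a) := funext hν
    rw [h]
    exact continuous_const.div (continuous_const.mul duffI_continuous)
      (fun a => by have := hIpos a; positivity)
  -- strict monotonicity
  have hmono : StrictMonoOn ν (Ioi 0) := by
    intro a ha b hb hab
    have h1 : duffI b < duffI a := duffI_strictAnti (le_of_lt ha) hab
    rw [hν a, hν b]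
    exact div_lt_div_of_pos_left (by linarith) (by linarith [hIpos b]) (by linarith)
  -- maps to
  have hmaps : MapsTo ν (Ioi 0) (Ioi 1) := by
    intro a ha
    have h1 : duffI a < duffI 0 := duffI_strictAnti le_rfl ha
    rw [duffI_zero] at h1
    rw [mem_Ioi, hν a, lt_div_iff₀ (by linarith [hIpos a])]
    linarith [hIpos a]
  -- surjectivity
  have hsurj : SurjOn ν (Ioi 0) (Ioi 1) := by
    intro y hy
    rw [mem_Ioi] at hy
    obtain ⟨c, hc⟩ : ∃ c : ℝ, c = π / (2 * y) := ⟨_, rfl⟩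
    have hy0 : 0 < y := by linarith
    have hc0 : 0 < c := by rw [hc]; positivity
    have hcπ : c < π / 2 := by
      rw [hc]; exact div_lt_div_of_pos_left hπ (by linarith) (by linarith)
    obtain ⟨A, hA⟩ : ∃ A : ℝ, A = π * Real.sqrt 2 / (2 * c) + 1 := ⟨_, rfl⟩
    have hA0 : 0 < A := by rw [hA]; positivity
    have hIA : duffI A < c := by
      have h1 := duffI_le hA0
      have h2 : Real.sqrt 2 / A * (π / 2) < c := by
        rw [show Real.sqrt 2 / A * (π / 2) = π * Real.sqrt 2 / (2 * A) by ring,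
          div_lt_iff₀ (by positivity)]
        have h3 : c * (2 * A) = π * Real.sqrt 2 + 2 * c := by
          rw [hA]; field_simp
        nlinarith [hc0]
      linarith
    have hI0 : c < duffI 0 := by rw [duffI_zero]; exact hcπ
    have hiv := intermediate_value_Ioo' (le_of_lt hA0)
      (duffI_continuous.continuousOn (s := Icc 0 A))
    obtain ⟨a, haIoo, hac⟩ := hiv ⟨hIA, hI0⟩
    refine ⟨a, mem_Ioi.2 haIoo.1, ?_⟩
    rw [hν a, hac, hc]
    field_simp
    ring
  refine ⟨hνc.continuousOn, hmono, ⟨hmaps, hmono.injOn, hsurj⟩, ?_⟩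
  -- subharmonic resonance
  intro k hk ω hω hkω
  have hk0 : (0:ℝ) < k := by exact_mod_cast hk
  obtain ⟨a, ha, hνa⟩ := hsurj (mem_Ioi.2 hkω)
  rw [mem_Ioi] at ha
  refine ⟨a, ⟨ha, ?_⟩, ?_⟩
  · rw [hνa]
    field_simp
  · rintro a' ⟨ha', hω'⟩
    have heq : ν a' = (k:ℝ) * ω := by
      rw [hω']
      field_simp
    exact hmono.injOn (mem_Ioi.2 ha') (mem_Ioi.2 ha) (heq.trans hνa.symm)
end

section
/- Let γ > 0, A ∈ ℝ, ω > 0. For every initial condition (x₀, v₀) ∈ ℝ² there is a unique twice differentiable solution x : [0, ∞) → ℝ of x''(t) + γ x'(t) + x(t) + x(t)³ = A cos(ω t) with x(0) = x₀, x'(0) = v₀, and this solution is bounded: sup_{t ≥ 0} (|x(t)| + |x'(t)|) < ∞. (The damped, forced Duffing oscillator exhibits no finite-time blowup and all trajectories remain bounded.) -/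
open Real Set

noncomputable section DuffingAux12

namespace Duffing12

def G (γ A ω : ℝ) (t : ℝ) (p : ℝ × ℝ) : ℝ × ℝ :=
  (p.2, A * Real.cos (ω * t) - γ * p.2 - p.1 - p.1 ^ 3)

def W (ε : ℝ) (p : ℝ × ℝ) : ℝ :=
  p.2 ^ 2 / 2 + p.1 ^ 2 / 2 + p.1 ^ 4 / 4 + ε * p.1 * p.2

lemma W_lower {ε : ℝ} (hε : 0 < ε) (hε2 : ε ≤ 1/2) (p : ℝ × ℝ) :
    (p.1 ^ 2 + p.2 ^ 2) / 4 ≤ W ε p := by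
  have h1 : 0 ≤ ε * (p.1 + p.2) ^ 2 := by positivity
  have h2 : 0 ≤ (1/2 - ε) * p.1 ^ 2 := by nlinarith [sq_nonneg p.1]
  have h3 : 0 ≤ (1/2 - ε) * p.2 ^ 2 := by nlinarith [sq_nonneg p.2]
  have h4 : 0 ≤ p.1 ^ 4 := by positivity
  unfold W; nlinarith


lemma keyineq {γ A ε : ℝ} (hγ : 0 < γ) (hε : 0 < ε) (hε2 : ε ≤ 1/2)
    (hεγ : ε * (1 + γ ^ 2) ≤ γ / 4) (x v θ : ℝ) (hθ : θ ^ 2 ≤ 1) :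
    v * (A * θ - γ * v - x - x ^ 3) + (x + x ^ 3) * v
      + ε * (v ^ 2 + x * (A * θ - γ * v - x - x ^ 3))
      ≤ -(ε/2) * (v ^ 2 / 2 + x ^ 2 / 2 + x ^ 4 / 4 + ε * x * v)
        + (A ^ 2 / γ + ε * A ^ 2) := by
  have h1 : A * v * θ - γ/4 * v^2 ≤ A^2 / γ := by
    rw [le_div_iff₀ hγ]
    nlinarith [sq_nonneg (γ * v - 2 * A * θ),
      mul_nonneg (sq_nonneg A) (sub_nonneg.2 hθ)]
  have h2 : ε * (A * x * θ) ≤ ε * (x^2/4) + ε * A^2 := by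
    have : A * x * θ ≤ x^2/4 + A^2 := by
      nlinarith [sq_nonneg (x - 2 * A * θ), mul_nonneg (sq_nonneg A) (sub_nonneg.2 hθ)]
    nlinarith [mul_le_mul_of_nonneg_left this hε.le]
  have h3 : -(ε * (γ * x * v)) ≤ ε * (x^2/4) + ε * (γ^2 * v^2) := by
    have : -(γ * x * v) ≤ x^2/4 + γ^2 * v^2 := by nlinarith [sq_nonneg (x + 2 * γ * v)]
    nlinarith [mul_le_mul_of_nonneg_left this hε.le]
  have h4 : (ε^2/2) * (x*v) ≤ (ε/8) * x^2 + (ε/8) * v^2 := by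
    nlinarith [mul_nonneg (mul_nonneg hε.le hε.le) (sq_nonneg (x - v)),
      mul_nonneg (mul_nonneg hε.le (by linarith : (0:ℝ) ≤ 1/2 - ε))
        (add_nonneg (sq_nonneg x) (sq_nonneg v))]
  have h5 : ε * v^2 + ε * (γ^2 * v^2) ≤ γ/4 * v^2 := by
    nlinarith [mul_le_mul_of_nonneg_right hεγ (sq_nonneg v)]
  have h6 : 0 ≤ ε * x^4 := by positivity
  have h7 : 0 ≤ ε * x^2 := by positivity
  have h8 : 0 ≤ γ * v^2 := by positivity
  have h9 : 0 ≤ ε * v^2 := by positivity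
  nlinarith [h1, h2, h3, h4, h5, h6, h7, h8, h9]


lemma hasDerivWithinAt_fst {z : ℝ → ℝ × ℝ} {d : ℝ × ℝ} {s : Set ℝ} {t : ℝ}
    (h : HasDerivWithinAt z d s t) :
    HasDerivWithinAt (fun s => (z s).1) d.1 s t := by
  have := (h.hasFDerivWithinAt.fst).hasDerivWithinAt
  simpa using this

lemma hasDerivWithinAt_snd {z : ℝ → ℝ × ℝ} {d : ℝ × ℝ} {s : Set ℝ} {t : ℝ}
    (h : HasDerivWithinAt z d s t) :
    HasDerivWithinAt (fun s => (z s).2) d.2 s t := by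
  have := (h.hasFDerivWithinAt.snd).hasDerivWithinAt
  simpa using this

lemma continuous_W (ε : ℝ) : Continuous (W ε) := by
  unfold W; fun_prop

/-- Lyapunov/energy bound along any solution of the Duffing ODE on `[0, b]`. -/
lemma energy_bound {γ A ω ε : ℝ} (hγ : 0 < γ) (hε : 0 < ε) (hε2 : ε ≤ 1/2)
    (hεγ : ε * (1 + γ ^ 2) ≤ γ / 4) {z : ℝ → ℝ × ℝ} {b : ℝ}
    (hz : ∀ t ∈ Icc (0:ℝ) b, HasDerivWithinAt z (G γ A ω t (z t)) (Icc 0 b) t) :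
    ∀ t ∈ Icc (0:ℝ) b, W ε (z t) ≤ max (W ε (z 0)) ((A^2/γ + ε*A^2) / (ε/2)) := by
  set c : ℝ := ε/2 with hc
  set C₀ : ℝ := A^2/γ + ε*A^2 with hC₀
  have hcpos : 0 < c := by positivity
  have hzc : ContinuousOn z (Icc 0 b) := fun t ht => (hz t ht).continuousWithinAt
  set φ : ℝ → ℝ := fun t => (W ε (z t) - C₀ / c) * Real.exp (c * t) with hφ
  -- derivative of φ at interior points
  have hφderiv : ∀ t ∈ Ioo (0:ℝ) b, ∃ d : ℝ, HasDerivAt φ d t ∧ d ≤ 0 := by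
    intro t ht
    have hzt : HasDerivAt z (G γ A ω t (z t)) t :=
      (hz t (Ioo_subset_Icc_self ht)).hasDerivAt (Icc_mem_nhds ht.1 ht.2)
    have hd1 : HasDerivAt (fun s => (z s).1) ((z t).2) t := by
      have := hasDerivWithinAt_fst hzt.hasDerivWithinAt (s := univ)
      rw [hasDerivWithinAt_univ] at this
      exact this
    set v' : ℝ := A * Real.cos (ω * t) - γ * (z t).2 - (z t).1 - (z t).1 ^ 3 with hv'
    have hd2 : HasDerivAt (fun s => (z s).2) v' t := by
      have := hasDerivWithinAt_snd hzt.hasDerivWithinAt (s := univ)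
      rw [hasDerivWithinAt_univ] at this
      exact this
    have hWz : HasDerivAt (fun s => W ε (z s))
        ((z t).2 * v' + ((z t).1 + (z t).1 ^ 3) * (z t).2
          + ε * ((z t).2 ^ 2 + (z t).1 * v')) t := by
      have h := ((((hd2.pow 2).div_const 2).add ((hd1.pow 2).div_const 2)).add
          ((hd1.pow 4).div_const 4)).add (((hd1.const_mul ε).mul hd2))
      refine h.congr_deriv ?_
      push_cast; ring
    have hexp : HasDerivAt (fun s => Real.exp (c * s)) (Real.exp (c * t) * c) t := by
      have := ((hasDerivAt_id t).const_mul c).exp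
      simpa [mul_comm] using this
    refine ⟨_, (hWz.sub_const (C₀ / c)).mul hexp, ?_⟩
    have hkey := keyineq (A := A) hγ hε hε2 hεγ (z t).1 (z t).2 (Real.cos (ω * t))
      (by nlinarith [Real.neg_one_le_cos (ω * t), Real.cos_le_one (ω * t)])
    have hCc : c * (C₀ / c) = C₀ := by field_simp
    have hle : ((z t).2 * v' + ((z t).1 + (z t).1 ^ 3) * (z t).2
          + ε * ((z t).2 ^ 2 + (z t).1 * v')) + c * (W ε (z t) - C₀ / c) ≤ 0 := by
      have h1 : ((z t).2 * v' + ((z t).1 + (z t).1 ^ 3) * (z t).2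
          + ε * ((z t).2 ^ 2 + (z t).1 * v')) ≤ -c * W ε (z t) + C₀ := by
        simpa [W, hv', hc, hC₀] using hkey
      have expand : c * (W ε (z t) - C₀ / c) = c * W ε (z t) - C₀ := by
        rw [mul_sub, hCc]
      rw [expand]; linarith [h1]
    have hexp_pos : 0 < Real.exp (c * t) := Real.exp_pos _
    calc ((z t).2 * v' + ((z t).1 + (z t).1 ^ 3) * (z t).2
          + ε * ((z t).2 ^ 2 + (z t).1 * v')) * Real.exp (c * t)
          + (W ε (z t) - C₀ / c) * (Real.exp (c * t) * c)
        = (((z t).2 * v' + ((z t).1 + (z t).1 ^ 3) * (z t).2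
          + ε * ((z t).2 ^ 2 + (z t).1 * v')) + c * (W ε (z t) - C₀ / c))
            * Real.exp (c * t) := by ring
      _ ≤ 0 := mul_nonpos_of_nonpos_of_nonneg hle hexp_pos.le
  have hφanti : AntitoneOn φ (Icc 0 b) := by
    apply antitoneOn_of_deriv_nonpos (convex_Icc 0 b)
    · apply ContinuousOn.mul
      · exact ((continuous_W ε).comp_continuousOn hzc).sub continuousOn_const
      · fun_prop
    · intro t ht
      rw [interior_Icc] at ht
      obtain ⟨d, hd, _⟩ := hφderiv t ht
      exact hd.differentiableAt.differentiableWithinAt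
    · intro t ht
      rw [interior_Icc] at ht
      obtain ⟨d, hd, hd0⟩ := hφderiv t ht
      rw [hd.deriv]; exact hd0
  intro t ht
  have h0b : (0:ℝ) ∈ Icc (0:ℝ) b := ⟨le_refl 0, le_trans ht.1 ht.2⟩
  have := hφanti h0b ht ht.1
  rw [hφ] at this
  simp only [mul_zero, Real.exp_zero, mul_one] at this
  have hexp1 : (1:ℝ) ≤ Real.exp (c * t) := by
    rw [← Real.exp_zero]; exact Real.exp_le_exp.2 (by nlinarith [ht.1])
  rcases le_or_gt (W ε (z t)) (C₀ / c) with h | h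
  · exact le_trans h (le_max_right _ _)
  · have h1 : W ε (z t) - C₀ / c ≤ (W ε (z t) - C₀ / c) * Real.exp (c * t) :=
      le_mul_of_one_le_right (by linarith) hexp1
    have : W ε (z t) ≤ W ε (z 0) := by linarith
    exact le_trans this (le_max_left _ _)

def cl (K a : ℝ) : ℝ := max (-K) (min K a)

lemma cl_eq {K a : ℝ} (h : |a| ≤ K) : cl K a = a := by
  rw [abs_le] at h
  unfold cl
  rw [min_eq_right h.2, max_eq_right h.1]

lemma abs_cl {K : ℝ} (hK : 0 ≤ K) (a : ℝ) : |cl K a| ≤ K := by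
  rw [abs_le]
  exact ⟨le_max_left _ _, max_le (by linarith) (min_le_left _ _)⟩

lemma cl_lip (K a b : ℝ) : |cl K a - cl K b| ≤ |a - b| := by
  unfold cl
  calc |max (-K) (min K a) - max (-K) (min K b)|
      ≤ max |(-K) - (-K)| |min K a - min K b| := abs_max_sub_max_le_max _ _ _ _
    _ ≤ |a - b| := by
        apply max_le
        · simp [abs_nonneg]
        · calc |min K a - min K b| ≤ max |K - K| |a - b| := abs_min_sub_min_le_max _ _ _ _
            _ ≤ |a - b| := by apply max_le <;> simp

lemma cube_lip {K a b : ℝ} (ha : |a| ≤ K) (hb : |b| ≤ K) :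
    |a ^ 3 - b ^ 3| ≤ 3 * K ^ 2 * |a - b| := by
  obtain ⟨ha1, ha2⟩ := abs_le.mp ha
  obtain ⟨hb1, hb2⟩ := abs_le.mp hb
  have hs : 0 ≤ a^2 + a*b + b^2 := by nlinarith [sq_nonneg (a+b), sq_nonneg a, sq_nonneg b]
  have hs2 : a^2 + a*b + b^2 ≤ 3*K^2 := by
    nlinarith [mul_nonneg (sub_nonneg.2 ha2) (sub_nonneg.2 hb2),
      mul_nonneg (by linarith : (0:ℝ) ≤ a + K) (by linarith : (0:ℝ) ≤ b + K),
      mul_nonneg (sub_nonneg.2 ha2) (by linarith : (0:ℝ) ≤ b + K),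
      mul_nonneg (by linarith : (0:ℝ) ≤ a + K) (sub_nonneg.2 hb2)]
  have heq : a ^ 3 - b ^ 3 = (a - b) * (a^2 + a*b + b^2) := by ring
  rw [heq, abs_mul, abs_of_nonneg hs, mul_comm (3 * K ^ 2)]
  exact mul_le_mul_of_nonneg_left hs2 (abs_nonneg _)

def Fc (γ A ω K : ℝ) (t : ℝ) (p : ℝ × ℝ) : ℝ × ℝ :=
  (cl K p.2, A * Real.cos (ω * t) - γ * cl K p.2 - cl K p.1 - (cl K p.1) ^ 3)

lemma Fc_eq_G {γ A ω K : ℝ} {t : ℝ} {p : ℝ × ℝ} (h1 : |p.1| ≤ K) (h2 : |p.2| ≤ K) :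
    Fc γ A ω K t p = G γ A ω t p := by
  unfold Fc G
  rw [cl_eq h1, cl_eq h2]

lemma Fc_lipschitz {γ K : ℝ} (hγ : 0 < γ) (hK : 0 ≤ K) (A ω : ℝ) (t : ℝ) :
    LipschitzWith ⟨γ + 1 + 3 * K ^ 2, by positivity⟩ (Fc γ A ω K t) := by
  apply LipschitzWith.of_dist_le_mul
  intro p q
  have hL1 : (1:ℝ) ≤ γ + 1 + 3 * K ^ 2 := by nlinarith [sq_nonneg K]
  rw [Prod.dist_eq, Prod.dist_eq]
  change _ ≤ (γ + 1 + 3 * K ^ 2) * _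
  set m := max (dist p.1 q.1) (dist p.2 q.2) with hm
  have hm1 : dist p.1 q.1 ≤ m := le_max_left _ _
  have hm2 : dist p.2 q.2 ≤ m := le_max_right _ _
  have hm0 : 0 ≤ m := le_trans dist_nonneg hm1
  simp only [Real.dist_eq] at *
  have hc1 : |cl K p.1 - cl K q.1| ≤ m := le_trans (cl_lip _ _ _) hm1
  have hc2 : |cl K p.2 - cl K q.2| ≤ m := le_trans (cl_lip _ _ _) hm2
  have hcube : |(cl K p.1) ^ 3 - (cl K q.1) ^ 3| ≤ 3 * K ^ 2 * m := by
    calc |(cl K p.1) ^ 3 - (cl K q.1) ^ 3|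
        ≤ 3 * K ^ 2 * |cl K p.1 - cl K q.1| := cube_lip (abs_cl hK _) (abs_cl hK _)
      _ ≤ 3 * K ^ 2 * m := mul_le_mul_of_nonneg_left hc1 (by positivity)
  apply max_le
  · simp only [Fc]
    calc |cl K p.2 - cl K q.2| ≤ m := hc2
      _ ≤ (γ + 1 + 3 * K ^ 2) * m := le_mul_of_one_le_left hm0 hL1
  · simp only [Fc]
    obtain ⟨e1, e2⟩ := abs_le.mp hc1
    obtain ⟨f1, f2⟩ := abs_le.mp hc2
    obtain ⟨g1, g2⟩ := abs_le.mp hcube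
    rw [abs_le]
    constructor
    · nlinarith [mul_le_mul_of_nonneg_left f2 hγ.le]
    · nlinarith [mul_le_mul_of_nonneg_left f1 hγ.le]

lemma Fc_norm_le {γ K : ℝ} (hγ : 0 < γ) (hK : 0 ≤ K) (A ω : ℝ) (t : ℝ) (p : ℝ × ℝ) :
    ‖Fc γ A ω K t p‖ ≤ |A| + γ * K + K + K ^ 3 := by
  rw [Prod.norm_def]
  obtain ⟨a1, a2⟩ := abs_le.mp (abs_cl hK p.1)
  obtain ⟨b1, b2⟩ := abs_le.mp (abs_cl hK p.2)
  have hcos1 := Real.neg_one_le_cos (ω * t)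
  have hcos2 := Real.cos_le_one (ω * t)
  have hA1 : -|A| ≤ A := neg_abs_le A
  have hA2 : A ≤ |A| := le_abs_self A
  have hcube : |(cl K p.1) ^ 3| ≤ K ^ 3 := by
    rw [abs_pow]
    exact pow_le_pow_left₀ (abs_nonneg _) (abs_cl hK p.1) 3
  obtain ⟨c1, c2⟩ := abs_le.mp hcube
  have hAc : |A * Real.cos (ω * t)| ≤ |A| := by
    rw [abs_mul]
    exact mul_le_of_le_one_right (abs_nonneg A) (Real.abs_cos_le_one _)
  obtain ⟨d1, d2⟩ := abs_le.mp hAc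
  apply max_le
  · simp only [Real.norm_eq_abs, Fc]
    calc |cl K p.2| ≤ K := abs_cl hK p.2
      _ ≤ |A| + γ * K + K + K ^ 3 := by nlinarith [abs_nonneg A, pow_nonneg hK 3]
  · simp only [Real.norm_eq_abs, Fc]
    rw [abs_le]
    constructor
    · nlinarith [mul_le_mul_of_nonneg_left b2 hγ.le]
    · nlinarith [mul_le_mul_of_nonneg_left b1 hγ.le]


end Duffing12

end DuffingAux12

open Duffing12

/-- For `γ > 0`, every initial condition `(x₀, v₀)` gives rise to a unique
twice differentiable solution `x : [0, ∞) → ℝ` of the forced, damped Duffing equation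
`x'' + γ x' + x + x³ = A cos(ω t)`, and this solution is bounded:
`sup_{t ≥ 0} (|x(t)| + |x'(t)|) < ∞` (no finite-time blowup; all trajectories remain
bounded). -/
theorem duffing_global_existence_uniqueness_bounded (γ A ω x₀ v₀ : ℝ)
    (hγ : 0 < γ) (hω : 0 < ω) :
    ∃ x x' x'' : ℝ → ℝ,
      (∀ t ∈ Ici (0:ℝ), HasDerivWithinAt x (x' t) (Ici 0) t) ∧
      (∀ t ∈ Ici (0:ℝ), HasDerivWithinAt x' (x'' t) (Ici 0) t) ∧
      x 0 = x₀ ∧ x' 0 = v₀ ∧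
      (∀ t ∈ Ici (0:ℝ), x'' t + γ * x' t + x t + (x t) ^ 3 = A * Real.cos (ω * t)) ∧
      (∃ M : ℝ, ∀ t ∈ Ici (0:ℝ), |x t| + |x' t| ≤ M) ∧
      (∀ y y' y'' : ℝ → ℝ,
        (∀ t ∈ Ici (0:ℝ), HasDerivWithinAt y (y' t) (Ici 0) t) →
        (∀ t ∈ Ici (0:ℝ), HasDerivWithinAt y' (y'' t) (Ici 0) t) →
        y 0 = x₀ → y' 0 = v₀ →
        (∀ t ∈ Ici (0:ℝ), y'' t + γ * y' t + y t + (y t) ^ 3 = A * Real.cos (ω * t)) →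
        ∀ t ∈ Ici (0:ℝ), y t = x t ∧ y' t = x' t) := by
  classical
  set p₀ : ℝ × ℝ := (x₀, v₀) with hp₀
  set ε : ℝ := min (γ / (4 * (1 + γ ^ 2))) (1/2) with hεdef
  have hε : 0 < ε := lt_min (by positivity) (by norm_num)
  have hε2 : ε ≤ 1/2 := min_le_right _ _
  have hεγ : ε * (1 + γ ^ 2) ≤ γ / 4 := by
    have h1 : ε ≤ γ / (4 * (1 + γ ^ 2)) := min_le_left _ _
    have h2 : (0:ℝ) < 1 + γ ^ 2 := by positivity
    calc ε * (1 + γ ^ 2) ≤ γ / (4 * (1 + γ ^ 2)) * (1 + γ ^ 2) :=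
          mul_le_mul_of_nonneg_right h1 h2.le
      _ = γ / 4 := by field_simp
  set B : ℝ := max (W ε p₀) ((A^2/γ + ε*A^2) / (ε/2)) with hB
  have hB0 : 0 ≤ B := le_trans (by positivity) (le_max_right _ _)
  set K : ℝ := 2 * Real.sqrt (B + 1) + 1 with hK
  have hK0 : (0:ℝ) ≤ K := by positivity
  have hKlt : 2 * Real.sqrt (B + 1) ≤ K := by rw [hK]; linarith
  -- components are controlled by W
  have hcomp : ∀ p : ℝ × ℝ, W ε p ≤ B + 1 →
      |p.1| ≤ 2 * Real.sqrt (B + 1) ∧ |p.2| ≤ 2 * Real.sqrt (B + 1) := by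
    intro p hp
    have h := W_lower hε hε2 p
    have hs := Real.sq_sqrt (show (0:ℝ) ≤ B + 1 by linarith)
    constructor
    · rw [← Real.sqrt_sq_eq_abs]
      calc Real.sqrt (p.1 ^ 2) ≤ Real.sqrt ((2 * Real.sqrt (B+1)) ^ 2) := by
            apply Real.sqrt_le_sqrt; nlinarith [sq_nonneg p.2]
        _ = 2 * Real.sqrt (B+1) := Real.sqrt_sq (by positivity)
    · rw [← Real.sqrt_sq_eq_abs]
      calc Real.sqrt (p.2 ^ 2) ≤ Real.sqrt ((2 * Real.sqrt (B+1)) ^ 2) := by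
            apply Real.sqrt_le_sqrt; nlinarith [sq_nonneg p.1]
        _ = 2 * Real.sqrt (B+1) := Real.sqrt_sq (by positivity)
  set L : NNReal := ⟨γ + 1 + 3 * K ^ 2, by positivity⟩ with hL
  have hlip : ∀ t, LipschitzWith L (Fc γ A ω K t) := fun t => Fc_lipschitz hγ hK0 A ω t
  set Cb : ℝ := |A| + γ * K + K + K ^ 3 with hCb
  have hCb0 : 0 ≤ Cb := by positivity
  -- local solutions on [0, n] via Picard–Lindelöf
  have hex : ∀ n : ℕ, ∃ f : ℝ → ℝ × ℝ, f 0 = p₀ ∧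
      ∀ t ∈ Icc (0:ℝ) n, HasDerivWithinAt f (Fc γ A ω K t (f t)) (Icc 0 n) t := by
    intro n
    have hpl : IsPicardLindelof (Fc γ A ω K) (tmin := 0) (tmax := n)
        ⟨0, le_refl 0, Nat.cast_nonneg n⟩ p₀ ⟨Cb * n, by positivity⟩ 0 ⟨Cb, hCb0⟩ L :=
      { lipschitzOnWith := fun t _ => (hlip t).lipschitzOnWith
        continuousOn := fun x _ => by
          apply Continuous.continuousOn
          unfold Fc
          fun_prop
        norm_le := fun t _ x _ => Fc_norm_le hγ hK0 A ω t x
        mul_max_le := by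
          have : max ((n:ℝ) - 0) (0 - 0) = (n:ℝ) := by
            rw [sub_zero, sub_zero, max_eq_left (Nat.cast_nonneg n)]
          change Cb * max ((n:ℝ) - 0) (0 - 0) ≤ Cb * n - 0
          rw [this, sub_zero] }
    exact hpl.exists_eq_forall_mem_Icc_hasDerivWithinAt₀
  choose useq h0seq hseq using hex
  -- agreement of local solutions
  have hagree : ∀ m n : ℕ, (m:ℝ) ≤ (n:ℝ) → Set.EqOn (useq m) (useq n) (Icc 0 m) := by
    intro m n hmn
    apply ODE_solution_unique hlip
    · exact fun t ht => (hseq m t ht).continuousWithinAt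
    · intro t ht
      refine (hseq m t (Ico_subset_Icc_self ht)).mono_of_mem_nhdsWithin ?_
      exact mem_nhdsWithin.2
        ⟨Iio (m:ℝ), isOpen_Iio, ht.2, fun s hs => ⟨le_trans ht.1 hs.2, hs.1.le⟩⟩
    · exact fun t ht => ((hseq n t ⟨ht.1, le_trans ht.2 hmn⟩).continuousWithinAt).mono
        (Icc_subset_Icc_right hmn)
    · intro t ht
      refine (hseq n t ⟨ht.1, le_trans ht.2.le hmn⟩).mono_of_mem_nhdsWithin ?_
      exact mem_nhdsWithin.2
        ⟨Iio (n:ℝ), isOpen_Iio, lt_of_lt_of_le ht.2 hmn,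
          fun s hs => ⟨le_trans ht.1 hs.2, hs.1.le⟩⟩
    · rw [h0seq m, h0seq n]
  set u : ℝ → ℝ × ℝ := fun t => useq (⌊t⌋₊ + 1) t with hu
  have hu0 : u 0 = p₀ := by
    have h : (⌊(0:ℝ)⌋₊ + 1) = 1 := by norm_num
    rw [hu]; simp only [h]; exact h0seq 1
  have hu_eqn : ∀ n : ℕ, ∀ t ∈ Icc (0:ℝ) (n:ℝ), u t = useq n t := by
    intro n t ht
    rcases le_total (((⌊t⌋₊ + 1 : ℕ)):ℝ) ((n:ℝ)) with h | h
    · refine hagree (⌊t⌋₊ + 1) n h ⟨ht.1, ?_⟩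
      push_cast
      exact (Nat.lt_floor_add_one t).le
    · exact (hagree n (⌊t⌋₊ + 1) h ht).symm
  have hFderiv : ∀ t ∈ Ici (0:ℝ), HasDerivWithinAt u (Fc γ A ω K t (u t)) (Ici 0) t := by
    intro t ht
    have htn : t < ((⌊t⌋₊ + 1 : ℕ) : ℝ) := by push_cast; exact Nat.lt_floor_add_one t
    have hmem : Icc (0:ℝ) ((⌊t⌋₊ + 1 : ℕ) : ℝ) ∈ nhdsWithin t (Ici 0) :=
      mem_nhdsWithin.2 ⟨Iio _, isOpen_Iio, htn, fun s hs => ⟨hs.2, hs.1.le⟩⟩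
    have h1 := (hseq (⌊t⌋₊ + 1) t ⟨ht, htn.le⟩).mono_of_mem_nhdsWithin hmem
    have h2 : HasDerivWithinAt u (Fc γ A ω K t (useq (⌊t⌋₊ + 1) t)) (Ici 0) t := by
      apply h1.congr_of_eventuallyEq
      · exact Filter.eventuallyEq_of_mem hmem (fun s hs => hu_eqn _ s hs)
      · exact hu_eqn _ t ⟨ht, htn.le⟩
    rw [show u t = useq (⌊t⌋₊ + 1) t from hu_eqn _ t ⟨ht, htn.le⟩]
    exact h2
  have hucont : ContinuousOn u (Ici 0) := fun t ht => (hFderiv t ht).continuousWithinAt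
  have hWp₀ : W ε p₀ ≤ B := le_max_left _ _
  -- the glued solution never reaches the clamp region
  have hWu_lt : ∀ t ∈ Ici (0:ℝ), W ε (u t) < B + 1 := by
    by_contra hcon
    push_neg at hcon
    obtain ⟨t₁, ht₁, hWt₁⟩ := hcon
    set S : Set ℝ := {t : ℝ | 0 ≤ t ∧ B + 1 ≤ W ε (u t)} with hS
    have hSne : S.Nonempty := ⟨t₁, ht₁, hWt₁⟩
    have hSclosed : IsClosed S := by
      have hseteq : S = Ici 0 ∩ (fun t => W ε (u t)) ⁻¹' (Ici (B+1)) := by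
        ext r; simp [hS, mem_Ici]
      rw [hseteq]
      exact ContinuousOn.preimage_isClosed_of_isClosed
        ((continuous_W ε).comp_continuousOn hucont) isClosed_Ici isClosed_Ici
    have hSbdd : BddBelow S := ⟨0, fun s hs => hs.1⟩
    set τ : ℝ := sInf S with hτ
    have hτS : τ ∈ S := hSclosed.csInf_mem hSne hSbdd
    have hτ0 : 0 ≤ τ := hτS.1
    have hτpos : 0 < τ := by
      rcases hτ0.lt_or_eq with h | h
      · exact h
      · exfalso
        have h2 := hτS.2
        rw [← h, hu0] at h2
        linarith
    have hlt : ∀ s ∈ Ico (0:ℝ) τ, W ε (u s) ≤ B + 1 := by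
      intro s hs
      by_contra hgt
      push_neg at hgt
      exact absurd (csInf_le hSbdd ⟨hs.1, hgt.le⟩) (not_le.2 hs.2)
    have hle : ∀ s ∈ Icc (0:ℝ) τ, W ε (u s) ≤ B + 1 := by
      intro s hs
      rcases hs.2.lt_or_eq with h | h
      · exact hlt s ⟨hs.1, h⟩
      · rw [h]
        have hnb : (nhdsWithin τ (Ico 0 τ)).NeBot := by
          rw [← mem_closure_iff_nhdsWithin_neBot]
          rw [closure_Ico (ne_of_lt hτpos)]
          exact ⟨hτ0, le_refl τ⟩
        have htend : Filter.Tendsto (fun r => W ε (u r)) (nhdsWithin τ (Ico 0 τ))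
            (nhds (W ε (u τ))) := by
          have hc := ((continuous_W ε).comp_continuousOn hucont) τ (mem_Ici.2 hτ0)
          exact (hc.mono (fun r hr => hr.1)).tendsto
        refine le_of_tendsto htend ?_
        exact Filter.eventually_of_mem self_mem_nhdsWithin (fun r hr => hlt r hr)
    have hG : ∀ s ∈ Icc (0:ℝ) τ, HasDerivWithinAt u (G γ A ω s (u s)) (Icc 0 τ) s := by
      intro s hs
      have h := (hFderiv s hs.1).mono (Icc_subset_Ici_self : Icc (0:ℝ) τ ⊆ Ici 0)
      rwa [Fc_eq_G (((hcomp _ (hle s hs)).1).trans hKlt)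
        (((hcomp _ (hle s hs)).2).trans hKlt)] at h
    have hEB := energy_bound hγ hε hε2 hεγ hG τ ⟨hτ0, le_refl τ⟩
    rw [hu0] at hEB
    have h2 := hτS.2
    have hBeq : max (W ε p₀) ((A^2/γ + ε*A^2) / (ε/2)) = B := hB.symm
    rw [hBeq] at hEB
    linarith
  have hGderiv : ∀ t ∈ Ici (0:ℝ), HasDerivWithinAt u (G γ A ω t (u t)) (Ici 0) t := by
    intro t ht
    have h := hFderiv t ht
    rwa [Fc_eq_G (((hcomp _ (hWu_lt t ht).le).1).trans hKlt)
      (((hcomp _ (hWu_lt t ht).le).2).trans hKlt)] at h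
  have hWuB : ∀ t ∈ Ici (0:ℝ), W ε (u t) ≤ B := by
    intro t ht
    have hG' : ∀ s ∈ Icc (0:ℝ) t, HasDerivWithinAt u (G γ A ω s (u s)) (Icc 0 t) s :=
      fun s hs => (hGderiv s hs.1).mono (Icc_subset_Ici_self : Icc (0:ℝ) t ⊆ Ici 0)
    have hEB := energy_bound hγ hε hε2 hεγ hG' t ⟨ht, le_refl t⟩
    rw [hu0] at hEB
    rwa [hB.symm] at hEB
  refine ⟨fun t => (u t).1, fun t => (u t).2,
    fun t => A * Real.cos (ω * t) - γ * (u t).2 - (u t).1 - (u t).1 ^ 3,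
    ?_, ?_, ?_, ?_, ?_, ?_, ?_⟩
  · intro t ht
    have h := hasDerivWithinAt_fst (hGderiv t ht)
    simpa [G] using h
  · intro t ht
    have h := hasDerivWithinAt_snd (hGderiv t ht)
    simpa [G] using h
  · show (u 0).1 = x₀
    rw [hu0]
  · show (u 0).2 = v₀
    rw [hu0]
  · intro t ht; ring
  · refine ⟨4 * Real.sqrt (B + 1), fun t ht => ?_⟩
    have h := hcomp (u t) ((hWuB t ht).trans (by linarith))
    linarith [h.1, h.2]
  · intro y y' y'' hy hy' hy0 hy'0 heqn t ht
    set z : ℝ → ℝ × ℝ := fun s => (y s, y' s) with hz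
    have hzderiv : ∀ s ∈ Ici (0:ℝ), HasDerivWithinAt z (G γ A ω s (z s)) (Ici 0) s := by
      intro s hs
      have h := (hy s hs).prodMk (hy' s hs)
      have hval : (y' s, y'' s) = G γ A ω s (z s) := by
        unfold G
        simp only [hz]
        refine Prod.ext rfl ?_
        have := heqn s hs
        simp only
        linarith
      rwa [hval] at h
    have hz0 : z 0 = p₀ := by rw [hz]; simp only; rw [hy0, hy'0]
    have hWz : ∀ s ∈ Icc (0:ℝ) t, W ε (z s) ≤ B := by
      intro s hs
      have hG' : ∀ r ∈ Icc (0:ℝ) t, HasDerivWithinAt z (G γ A ω r (z r)) (Icc 0 t) r :=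
        fun r hr => (hzderiv r hr.1).mono (Icc_subset_Ici_self : Icc (0:ℝ) t ⊆ Ici 0)
      have hEB := energy_bound hγ hε hε2 hεγ hG' s hs
      rw [hz0] at hEB
      rwa [hB.symm] at hEB
    have hzF : ∀ s ∈ Ico (0:ℝ) t, HasDerivWithinAt z (Fc γ A ω K s (z s)) (Ici s) s := by
      intro s hs
      have h := (hzderiv s hs.1).mono (Ici_subset_Ici.2 hs.1)
      have hb := hcomp (z s) ((hWz s (Ico_subset_Icc_self hs)).trans (by linarith))
      rwa [← Fc_eq_G (hb.1.trans hKlt) (hb.2.trans hKlt)] at h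
    have huF' : ∀ s ∈ Ico (0:ℝ) t, HasDerivWithinAt u (Fc γ A ω K s (u s)) (Ici s) s :=
      fun s hs => (hFderiv s hs.1).mono (Ici_subset_Ici.2 hs.1)
    have hcontz : ContinuousOn z (Icc 0 t) :=
      fun s hs => ((hzderiv s hs.1).continuousWithinAt).mono
        (Icc_subset_Ici_self : Icc (0:ℝ) t ⊆ Ici 0)
    have hcontu : ContinuousOn u (Icc 0 t) :=
      fun s hs => ((hFderiv s hs.1).continuousWithinAt).mono
        (Icc_subset_Ici_self : Icc (0:ℝ) t ⊆ Ici 0)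
    have hEq := ODE_solution_unique hlip hcontz hzF hcontu huF' (by rw [hz0, hu0])
    have hzu := hEq ⟨ht, le_refl t⟩
    exact ⟨congrArg Prod.fst hzu, congrArg Prod.snd hzu⟩
end

section
/- Let γ > 0. Every twice differentiable solution x : [0, ∞) → ℝ of the unforced, damped Duffing equation x''(t) + γ x'(t) + x(t) + x(t)³ = 0 satisfies (x(t), x'(t)) → (0, 0) as t → ∞. In particular, the unforced damped Duffing oscillator has no nonconstant periodic solutions. -/
open Real Set Filter Topology

/-- For `γ > 0`, every twice differentiable solution of the unforced,
damped Duffing equation `x'' + γ x' + x + x³ = 0` on `[0, ∞)` satisfies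
`(x(t), x'(t)) → (0, 0)` as `t → ∞`; in particular the unforced damped Duffing oscillator
has no nonconstant periodic solutions. -/
theorem duffing_damped_unforced_decay (γ : ℝ) (hγ : 0 < γ) (x x' x'' : ℝ → ℝ)
    (hx1 : ∀ t ∈ Ici (0:ℝ), HasDerivWithinAt x (x' t) (Ici 0) t)
    (hx2 : ∀ t ∈ Ici (0:ℝ), HasDerivWithinAt x' (x'' t) (Ici 0) t)
    (hode : ∀ t ∈ Ici (0:ℝ), x'' t + γ * x' t + x t + (x t) ^ 3 = 0) :
    Tendsto (fun t => (x t, x' t)) atTop (𝓝 (0, 0)) ∧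
      ∀ T > 0, (∀ t ∈ Ici (0:ℝ), x (t + T) = x t) → ∀ t ∈ Ici (0:ℝ), x t = x 0 := by
  -- choose a small positive ε for the strict Lyapunov function
  set ε : ℝ := min (γ/3) (min (1/2) (γ/(γ+1)^2)) with hεdef
  have hγ1 : (0:ℝ) < (γ+1)^2 := by positivity
  have hε0 : 0 < ε := lt_min (by linarith) (lt_min (by norm_num) (by positivity))
  have hεa : ε ≤ γ/3 := min_le_left _ _
  have hεb : ε ≤ 1/2 := (min_le_right _ _).trans (min_le_left _ _)
  have hεc : ε ≤ γ/(γ+1)^2 := (min_le_right _ _).trans (min_le_right _ _)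
  have hεγ : ε < γ := lt_of_le_of_lt hεa (by linarith)
  clear_value ε
  -- key quadratic inequality
  have hkey : ∀ u v : ℝ,
      0 ≤ (γ - 3*ε/2)*v^2 + (ε/2)*u^2 + (3*ε/4)*u^4 + ε*(γ-ε)*(u*v) := by
    intro u v
    have hA : γ/2 ≤ γ - 3*ε/2 := by linarith
    have h1 : ε * (γ+1)^2 ≤ γ := (le_div_iff₀ hγ1).1 hεc
    have h2 : (γ-ε)^2 ≤ (γ+1)^2 := by nlinarith
    have h3 : ε * (γ-ε)^2 ≤ 2*γ - 3*ε := by nlinarith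
    have hd : (ε*(γ-ε))^2 ≤ 4*(γ-3*ε/2)*(ε/2) := by nlinarith
    nlinarith [sq_nonneg (2*(γ-3*ε/2)*v + ε*(γ-ε)*u), sq_nonneg u, sq_nonneg (u^2),
      mul_nonneg (mul_nonneg hε0.le hε0.le) (sq_nonneg (u^2))]
  -- the Lyapunov function
  set V : ℝ → ℝ := fun t => (x' t)^2/2 + ((x t)^2/2 + (x t)^4/4) + ε*(x t * x' t) with hVdef
  set dV : ℝ → ℝ := fun t =>
    (2 * x' t ^ 1 * x'' t)/2 + ((2 * x t ^ 1 * x' t)/2 + (4 * x t ^ 3 * x' t)/4)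
      + ε*(x t * x'' t + x' t * x' t) with hdVdef
  clear_value V dV
  have hV : ∀ t ∈ Ici (0:ℝ), HasDerivWithinAt V (dV t) (Ici 0) t := by
    intro t ht
    have h1 := ((hx2 t ht).pow 2).div_const 2
    have h2 := ((hx1 t ht).pow 2).div_const 2
    have h3 := ((hx1 t ht).pow 4).div_const 4
    have h4 := ((hx1 t ht).mul (hx2 t ht)).const_mul ε
    have := (h1.add (h2.add h3)).add h4
    rw [hVdef]
    refine this.congr_deriv ?_
    simp only [hdVdef]
    push_cast
    ring
  have hdV : ∀ t ∈ Ici (0:ℝ), dV t + ε * V t ≤ 0 := by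
    intro t ht
    have hxx : x'' t = -(γ * x' t + x t + (x t)^3) := by linarith [hode t ht]
    simp only [hdVdef, hVdef, hxx]
    nlinarith [hkey (x t) (x' t)]
  -- W = V * exp(ε t) is antitone on [0,∞)
  set W : ℝ → ℝ := fun t => V t * Real.exp (ε * t) with hWdef
  clear_value W
  have hexp : ∀ t : ℝ, HasDerivAt (fun s => Real.exp (ε * s)) (Real.exp (ε * t) * (ε * 1)) t :=
    fun t => ((hasDerivAt_id t).const_mul ε).exp
  have hW : ∀ t ∈ Ici (0:ℝ), HasDerivWithinAt W
      (dV t * Real.exp (ε * t) + V t * (Real.exp (ε * t) * (ε * 1))) (Ici 0) t := by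
    intro t ht
    rw [hWdef]
    exact (hV t ht).mul ((hexp t).hasDerivWithinAt)
  have hW'le : ∀ t ∈ Ici (0:ℝ),
      dV t * Real.exp (ε * t) + V t * (Real.exp (ε * t) * (ε * 1)) ≤ 0 := by
    intro t ht
    have h1 : dV t * Real.exp (ε * t) + V t * (Real.exp (ε * t) * (ε * 1))
        = (dV t + ε * V t) * Real.exp (ε * t) := by ring
    rw [h1]
    exact mul_nonpos_of_nonpos_of_nonneg (hdV t ht) (Real.exp_pos _).le
  have hant : AntitoneOn W (Ici 0) := by
    apply antitoneOn_of_deriv_nonpos (convex_Ici 0)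
    · exact fun t ht => (hW t ht).continuousWithinAt
    · rw [interior_Ici]
      exact fun t ht =>
        (((hW t (mem_Ici.2 (le_of_lt ht))).hasDerivAt (Ici_mem_nhds ht)).differentiableAt).differentiableWithinAt
    · rw [interior_Ici]
      intro t ht
      rw [((hW t (mem_Ici.2 ht.le)).hasDerivAt (Ici_mem_nhds ht)).deriv]
      exact hW'le t (mem_Ici.2 ht.le)
  -- lower bound for V and decay of V
  have hVlow : ∀ t : ℝ, (1-ε)/2 * ((x t)^2 + (x' t)^2) ≤ V t := by
    intro t
    simp only [hVdef]
    nlinarith [mul_nonneg hε0.le (sq_nonneg (x t + x' t)), sq_nonneg ((x t)^2)]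
  have hVbound : ∀ t ∈ Ici (0:ℝ), (x t)^2 + (x' t)^2 ≤ 4 * V 0 * Real.exp (-(ε * t)) := by
    intro t ht
    have h1 : W t ≤ W 0 := hant (self_mem_Ici) ht ht
    have h2 : V t * Real.exp (ε * t) ≤ V 0 := by
      simpa [hWdef] using h1
    have h3 : V t ≤ V 0 * Real.exp (-(ε * t)) := by
      have he : V t = (V t * Real.exp (ε * t)) * Real.exp (-(ε * t)) := by
        rw [mul_assoc, ← Real.exp_add]; simp
      rw [he]
      exact mul_le_mul_of_nonneg_right h2 (Real.exp_pos _).le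
    have hp : (0:ℝ) ≤ (1/2 - ε) * ((x t)^2 + (x' t)^2) :=
      mul_nonneg (by linarith) (by positivity)
    nlinarith [hVlow t, hp, h3, sq_nonneg (x t), sq_nonneg (x' t)]
  have hdecay : Tendsto (fun t => 4 * V 0 * Real.exp (-(ε * t))) atTop (𝓝 0) := by
    have h1 : Tendsto (fun t : ℝ => ε * t) atTop atTop :=
      (tendsto_id.const_mul_atTop hε0)
    have h2 := tendsto_exp_neg_atTop_nhds_zero.comp h1
    simpa using h2.const_mul (4 * V 0)
  have hsq : Tendsto (fun t => (x t)^2 + (x' t)^2) atTop (𝓝 0) := by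
    apply squeeze_zero' (Eventually.of_forall fun t => by positivity) ?_ hdecay
    filter_upwards [eventually_ge_atTop (0:ℝ)] with t ht using hVbound t ht
  have hxsq : Tendsto (fun t => (x t)^2) atTop (𝓝 0) := by
    apply squeeze_zero' (Eventually.of_forall fun t => sq_nonneg _)
      (Eventually.of_forall fun t => ?_) hsq
    nlinarith [sq_nonneg (x' t)]
  have hx'sq : Tendsto (fun t => (x' t)^2) atTop (𝓝 0) := by
    apply squeeze_zero' (Eventually.of_forall fun t => sq_nonneg _)
      (Eventually.of_forall fun t => ?_) hsq
    nlinarith [sq_nonneg (x t)]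
  have habs : ∀ f : ℝ → ℝ, Tendsto (fun t => (f t)^2) atTop (𝓝 0) → Tendsto f atTop (𝓝 0) := by
    intro f hf
    rw [tendsto_zero_iff_abs_tendsto_zero]
    have := hf.sqrt
    simpa [Real.sqrt_sq_eq_abs, Function.comp_def] using this
  have hx0 : Tendsto x atTop (𝓝 0) := habs x hxsq
  have hx'0 : Tendsto x' atTop (𝓝 0) := habs x' hx'sq
  refine ⟨hx0.prodMk_nhds hx'0, ?_⟩
  intro T hT hper t ht
  have hzero : ∀ s ∈ Ici (0:ℝ), x s = 0 := by
    intro s hs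
    have hseq : ∀ n : ℕ, x (s + n*T) = x s := by
      intro n
      induction n with
      | zero => simp
      | succ n ih =>
        have he : s + ((n:ℝ)+1)*T = (s + n*T) + T := by ring
        have hpos : s + (n:ℝ)*T ∈ Ici (0:ℝ) :=
          add_nonneg hs (mul_nonneg (Nat.cast_nonneg n) hT.le)
        rw [Nat.cast_succ, he, hper _ hpos, ih]
    have h1 : Tendsto (fun n : ℕ => x (s + n*T)) atTop (𝓝 0) :=
      hx0.comp (tendsto_atTop_add_const_left _ s
        (tendsto_natCast_atTop_atTop.atTop_mul_const hT))
    simp only [hseq] at h1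
    exact tendsto_nhds_unique tendsto_const_nhds h1
  rw [hzero t ht, hzero 0 self_mem_Ici]
end
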